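/- Let μ₋ ≤ 0, T > 0, K > 0, s ∈ [0,T), and ε > 0. Define I = Φ((-μ₋(T-s) + εTe^{KT})/√(T-s)) - e^{2μ₋ εTe^{KT}} Φ((-μ₋(T-s) - εTe^{KT})/√(T-s)). Then I ≤ (2Te^{KT}/√(2π(T-s)) + 2|μ₋| T e^{KT}) ε. -/

import Mathlib

open MeasureTheory

/-- Standard normal cumulative distribution function. -/
noncomputable def Phi (y : ℝ) : ℝ :=
  ∫ z in Set.Iic y, Real.exp (-z ^ 2 / 2) / Real.sqrt (2 * Real.pi)

noncomputable def f0 (z : ℝ) : ℝ := Real.exp (-z ^ 2 / 2) / Real.sqrt (2 * Real.pi)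

lemma f0_eq : f0 = fun z => Real.exp (-(1/2) * z ^ 2) / Real.sqrt (2 * Real.pi) := by
  funext z; unfold f0; ring_nf

lemma int_f0 : Integrable f0 := by
  rw [f0_eq]
  exact (integrable_exp_neg_mul_sq (by norm_num : (0:ℝ) < 1/2)).div_const _

lemma f0_nonneg (z : ℝ) : 0 ≤ f0 z :=
  div_nonneg (Real.exp_pos _).le (Real.sqrt_nonneg _)

lemma f0_le (z : ℝ) : f0 z ≤ 1 / Real.sqrt (2 * Real.pi) := by
  unfold f0
  gcongr
  exact Real.exp_le_one_iff.2 (by nlinarith [sq_nonneg z])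

lemma Phi_nonneg' (y : ℝ) : 0 ≤ ∫ z in Set.Iic y, f0 z :=
  setIntegral_nonneg measurableSet_Iic fun z _ => f0_nonneg z

lemma Phi_le_one' (y : ℝ) : (∫ z in Set.Iic y, f0 z) ≤ 1 := by
  have h := setIntegral_le_integral (μ := volume) (s := Set.Iic y) int_f0
    (Filter.Eventually.of_forall f0_nonneg)
  have h2 : ∫ z, f0 z = 1 := by
    rw [f0_eq, MeasureTheory.integral_div, integral_gaussian,
      div_eq_one_iff_eq (by positivity)]
    norm_num
    ring
  linarith [h.trans_eq h2]

lemma Phi_sub (a b : ℝ) (h : b ≤ a) :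
    (∫ z in Set.Iic a, f0 z) - (∫ z in Set.Iic b, f0 z) ≤ (a - b) / Real.sqrt (2 * Real.pi) := by
  have h1 : (∫ z in Set.Iic a, f0 z) - (∫ z in Set.Iic b, f0 z) = ∫ z in Set.Ioc b a, f0 z := by
    rw [intervalIntegral.integral_Iic_sub_Iic int_f0.integrableOn int_f0.integrableOn,
      intervalIntegral.integral_of_le h]
  rw [h1]
  have h2 : (∫ z in Set.Ioc b a, f0 z) ≤ ∫ _z in Set.Ioc b a, 1 / Real.sqrt (2 * Real.pi) :=
    setIntegral_mono_on int_f0.integrableOn (integrableOn_const (by simp) enorm_ne_top)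
      measurableSet_Ioc fun z _ => f0_le z
  rw [setIntegral_const] at h2
  simpa [Real.volume_Ioc, ENNReal.toReal_ofReal (sub_nonneg.2 h), max_eq_left (sub_nonneg.2 h), smul_eq_mul,
    div_eq_mul_inv] using h2

lemma Phi_def (y : ℝ) : Phi y = ∫ z in Set.Iic y, f0 z := rfl

theorem stmt13 (μm T K s ε : ℝ) (hμm : μm ≤ 0) (hT : 0 < T) (hK : 0 < K)
    (hs : s ∈ Set.Ico 0 T) (hε : 0 < ε) :
    Phi ((-μm * (T - s) + ε * T * Real.exp (K * T)) / Real.sqrt (T - s))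
      - Real.exp (2 * μm * (ε * T * Real.exp (K * T))) *
        Phi ((-μm * (T - s) - ε * T * Real.exp (K * T)) / Real.sqrt (T - s))
    ≤ (2 * T * Real.exp (K * T) / Real.sqrt (2 * Real.pi * (T - s))
        + 2 * |μm| * T * Real.exp (K * T)) * ε := by
  obtain ⟨hs0, hsT⟩ := hs
  set E := ε * T * Real.exp (K * T) with hE
  have hEpos : 0 < E := by positivity
  have hts : 0 < T - s := by linarith
  have hsq : 0 < Real.sqrt (T - s) := Real.sqrt_pos.2 hts
  set a := (-μm * (T - s) + E) / Real.sqrt (T - s) with ha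
  set b := (-μm * (T - s) - E) / Real.sqrt (T - s) with hb
  have hba : b ≤ a := by rw [ha, hb]; gcongr; linarith
  have hab : a - b = 2 * E / Real.sqrt (T - s) := by
    rw [ha, hb, div_sub_div_same]; ring_nf
  have key1 : Phi a - Phi b ≤ (a - b) / Real.sqrt (2 * Real.pi) := by
    rw [Phi_def, Phi_def]; exact Phi_sub a b hba
  have key3 : Phi b ≤ 1 := by rw [Phi_def]; exact Phi_le_one' b
  have hc : 2 * μm * E ≤ 0 := mul_nonpos_of_nonpos_of_nonneg (by linarith) hEpos.le
  have hexp : 1 - Real.exp (2 * μm * E) ≤ -(2 * μm * E) := by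
    linarith [Real.add_one_le_exp (2 * μm * E)]
  have hexp0 : 0 ≤ 1 - Real.exp (2 * μm * E) := by
    linarith [Real.exp_le_one_iff.2 hc]
  have step : Phi a - Real.exp (2 * μm * E) * Phi b
      ≤ (a - b) / Real.sqrt (2 * Real.pi) + (1 - Real.exp (2 * μm * E)) := by
    have h4 : (1 - Real.exp (2 * μm * E)) * Phi b ≤ (1 - Real.exp (2 * μm * E)) * 1 :=
      mul_le_mul_of_nonneg_left key3 hexp0
    nlinarith [key1]
  have h1 : (a - b) / Real.sqrt (2 * Real.pi)
      = 2 * T * Real.exp (K * T) / Real.sqrt (2 * Real.pi * (T - s)) * ε := by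
    rw [hab, Real.sqrt_mul (by positivity : (0:ℝ) ≤ 2 * Real.pi) (T - s), hE]
    field_simp
  have h2 : 1 - Real.exp (2 * μm * E) ≤ 2 * |μm| * T * Real.exp (K * T) * ε := by
    rw [abs_of_nonpos hμm]
    calc 1 - Real.exp (2 * μm * E) ≤ -(2 * μm * E) := hexp
    _ = 2 * -μm * T * Real.exp (K * T) * ε := by rw [hE]; ring
  calc Phi a - Real.exp (2 * μm * E) * Phi b
      ≤ (a - b) / Real.sqrt (2 * Real.pi) + (1 - Real.exp (2 * μm * E)) := step
    _ ≤ 2 * T * Real.exp (K * T) / Real.sqrt (2 * Real.pi * (T - s)) * ε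
        + 2 * |μm| * T * Real.exp (K * T) * ε := by rw [h1] at *; linarith
    _ = (2 * T * Real.exp (K * T) / Real.sqrt (2 * Real.pi * (T - s))
        + 2 * |μm| * T * Real.exp (K * T)) * ε := by ring
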